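/- Let v₃ > 0, λ > v₃/2 and let (y, z, θ) solve y' = cos θ, z' = sin θ, θ' = 2λ + v₃ cos θ with θ(0) = 0. Then θ'(s) ≥ 2λ − v₃ > 0 for all s, θ is strictly increasing, lim_{s→±∞} θ(s) = ±∞, and if T > 0 is the unique value with θ(T) = 2π, then for all s: y(s + T) = y(s) + y(T), z(s + T) = z(s), θ(s + T) = θ(s) + 2π. In particular the curve (y, z) is invariant under the horizontal translation by (y(T), 0). -/

import Mathlib

open Filter Set

/-- Case `λ > v₃/2` of the generating-curve system with `θ 0 = 0`:
`θ' ≥ 2λ - v₃ > 0`, `θ` is strictly increasing with `θ(s) → ±∞` as `s → ±∞`,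
there is a unique `T > 0` with `θ T = 2π`, and for such `T` the solution satisfies
`y(s+T) = y(s) + y(T)`, `z(s+T) = z(s)`, `θ(s+T) = θ(s) + 2π`; in particular the
curve `(y, z)` is invariant under the horizontal translation by `(y T, 0)`. -/
theorem stmt6 (lam v₃ : ℝ) (hv : 0 < v₃) (hlam : v₃ / 2 < lam)
    (y z θ : ℝ → ℝ)
    (hy : ∀ s, HasDerivAt y (Real.cos (θ s)) s)
    (hz : ∀ s, HasDerivAt z (Real.sin (θ s)) s)
    (hθ : ∀ s, HasDerivAt θ (2*lam + v₃ * Real.cos (θ s)) s)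
    (hy0 : y 0 = 0) (hz0 : z 0 = 0) (hθ0 : θ 0 = 0) :
    (0 < 2*lam - v₃) ∧
    (∀ s, 2*lam - v₃ ≤ 2*lam + v₃ * Real.cos (θ s)) ∧
    StrictMono θ ∧
    Tendsto θ atTop atTop ∧ Tendsto θ atBot atBot ∧
    (∃! T : ℝ, 0 < T ∧ θ T = 2 * Real.pi) ∧
    (∀ T : ℝ, 0 < T → θ T = 2 * Real.pi →
      ∀ s, y (s + T) = y s + y T ∧ z (s + T) = z s ∧ θ (s + T) = θ s + 2 * Real.pi) := by
  have hc : 0 < 2*lam - v₃ := by linarith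
  have hbd : ∀ s, 2*lam - v₃ ≤ 2*lam + v₃ * Real.cos (θ s) := by
    intro s; nlinarith [Real.neg_one_le_cos (θ s)]
  have hθdiff : Differentiable ℝ θ := fun s => (hθ s).differentiableAt
  have hmono : StrictMono θ := by
    apply strictMono_of_deriv_pos
    intro s; rw [(hθ s).deriv]; linarith [hbd s]
  have hmg : Monotone (fun t => θ t - (2*lam - v₃) * t) := by
    apply monotone_of_deriv_nonneg
    · exact hθdiff.sub (differentiable_id.const_mul _)
    · intro t
      have h : HasDerivAt (fun t => θ t - (2*lam - v₃) * t)
          ((2*lam + v₃ * Real.cos (θ t)) - (2*lam - v₃) * 1) t :=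
        (hθ t).sub ((hasDerivAt_id t).const_mul _)
      rw [h.deriv]; nlinarith [hbd t]
  have hlin : ∀ s : ℝ, 0 ≤ s → (2*lam - v₃) * s ≤ θ s := by
    intro s hs
    have := hmg hs
    simp only [hθ0, mul_zero, sub_zero] at this
    linarith
  have hlin' : ∀ s : ℝ, s ≤ 0 → θ s ≤ (2*lam - v₃) * s := by
    intro s hs
    have := hmg hs
    simp only [hθ0, mul_zero, sub_zero] at this
    linarith
  have htop : Tendsto θ atTop atTop := by
    apply tendsto_atTop_mono' atTop (Filter.eventually_atTop.2 ⟨0, fun s hs => hlin s hs⟩)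
    exact (tendsto_id (α := ℝ)).const_mul_atTop hc
  have hbot : Tendsto θ atBot atBot := by
    apply tendsto_atBot_mono' atBot (Filter.eventually_atBot.2 ⟨0, fun s hs => hlin' s hs⟩)
    exact tendsto_atBot_atBot.2 fun b => ⟨b / (2*lam - v₃), fun a ha => by
      exact (le_div_iff₀' hc).1 ha⟩
  -- unique T
  have hTex : ∃! T : ℝ, 0 < T ∧ θ T = 2 * Real.pi := by
    obtain ⟨b, hb⟩ := (htop.eventually_ge_atTop (2 * Real.pi)).exists
    have hb0 : (0:ℝ) ≤ b := by
      by_contra h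
      have := hlin' b (le_of_lt (not_le.1 h))
      nlinarith [Real.pi_pos, mul_nonpos_of_nonneg_of_nonpos hc.le (le_of_lt (not_le.1 h))]
    have : (2 * Real.pi) ∈ Icc (θ 0) (θ b) := ⟨by rw [hθ0]; positivity, hb⟩
    obtain ⟨T, hTmem, hT⟩ := intermediate_value_Icc hb0 (hθdiff.continuous.continuousOn) this
    refine ⟨T, ⟨?_, hT⟩, ?_⟩
    · rcases lt_or_eq_of_le hTmem.1 with h | h
      · exact h
      · exfalso; rw [← h, hθ0] at hT; nlinarith [Real.pi_pos]
    · rintro T' ⟨_, hT'⟩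
      exact hmono.injective (hT'.trans hT.symm)
  refine ⟨hc, hbd, hmono, htop, hbot, hTex, ?_⟩
  intro T hT0 hTval s
  -- θ periodicity via ODE uniqueness
  set g : ℝ → ℝ := fun t => θ (t + T) - 2 * Real.pi with hgdef
  have hg' : ∀ t, HasDerivAt g (2*lam + v₃ * Real.cos (g t)) t := by
    intro t
    have h1 : HasDerivAt (fun t : ℝ => θ (t + T)) ((2*lam + v₃ * Real.cos (θ (t + T))) * 1) t :=
      (hθ (t + T)).comp t ((hasDerivAt_id t).add_const T)
    have h2 := h1.sub_const (2 * Real.pi)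
    have : Real.cos (θ (t + T)) = Real.cos (g t) := by
      rw [hgdef]; simp only []
      rw [← Real.cos_add_two_pi (θ (t + T) - 2 * Real.pi), sub_add_cancel]
    rw [this, mul_one] at h2
    exact h2
  have hK : LipschitzWith v₃.toNNReal (fun x : ℝ => 2*lam + v₃ * Real.cos x) := by
    apply lipschitzWith_of_nnnorm_deriv_le
    · exact (differentiable_const _).add (Real.differentiable_cos.const_mul _)
    · intro x
      have hd : HasDerivAt (fun x : ℝ => 2*lam + v₃ * Real.cos x) (v₃ * (-Real.sin x)) x :=
        ((Real.hasDerivAt_cos x).const_mul v₃).const_add _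
      rw [hd.deriv, ← NNReal.coe_le_coe]
      simp only [coe_nnnorm, Real.coe_toNNReal', Real.norm_eq_abs]
      rw [abs_mul, abs_neg, abs_of_pos hv]
      calc v₃ * |Real.sin x| ≤ v₃ * 1 := by
            exact mul_le_mul_of_nonneg_left (abs_le.2 ⟨Real.neg_one_le_sin x, Real.sin_le_one x⟩) hv.le
        _ = v₃ := mul_one v₃
      exact le_max_left _ _
  have hθper : ∀ t, θ (t + T) = θ t + 2 * Real.pi := by
    intro t
    have key : g t = θ t := by
      have hIoo : (0:ℝ) ∈ Ioo (-(|t| + 1)) (|t| + 1) := by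
        constructor <;> [nlinarith [abs_nonneg t]; nlinarith [abs_nonneg t]]
      have htmem : t ∈ Ioo (-(|t| + 1)) (|t| + 1) := by
        constructor <;> [nlinarith [neg_abs_le t]; nlinarith [le_abs_self t]]
      have := ODE_solution_unique_of_mem_Ioo
        (v := fun _ x => 2*lam + v₃ * Real.cos x) (s := fun _ => univ)
        (K := v₃.toNNReal)
        (fun _ _ => hK.lipschitzOnWith)
        hIoo
        (fun u _ => ⟨hg' u, mem_univ _⟩)
        (fun u _ => ⟨hθ u, mem_univ _⟩)
        (by rw [hgdef]; simp only []; rw [zero_add, hTval, sub_self, hθ0])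
      exact this htmem
    have := key
    rw [hgdef] at this
    simp only [] at this
    linarith [this]
  -- y and z periodicity
  have haux : ∀ (f : ℝ → ℝ) (d : ℝ → ℝ), (∀ u, HasDerivAt f (d (θ u)) u) →
      (∀ x : ℝ, d (x + 2 * Real.pi) = d x) → ∀ u, f (u + T) - f T = f u - f 0 := by
    intro f d hf hdper u
    have hdiff : Differentiable ℝ (fun u => f (u + T) - f T - f u) := by
      intro u
      exact ((((hf (u + T)).comp u ((hasDerivAt_id u).add_const T)).sub_const
        (f T)).sub (hf u)).differentiableAt
    have hzero : ∀ u, deriv (fun u => f (u + T) - f T - f u) u = 0 := by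
      intro u
      have h1 : HasDerivAt (fun u => f (u + T) - f T - f u)
          (d (θ (u + T)) * 1 - d (θ u)) u :=
        (((hf (u + T)).comp u ((hasDerivAt_id u).add_const T)).sub_const (f T)).sub (hf u)
      rw [h1.deriv, hθper u, hdper, mul_one, sub_self]
    have := is_const_of_deriv_eq_zero hdiff hzero u 0
    simp only [zero_add] at this
    linarith [this]
  have hApos : ∀ u, 0 < 2*lam + v₃ * Real.cos (θ u) := fun u => lt_of_lt_of_le hc (hbd u)
  have hzT : z T = 0 := by
    set w : ℝ → ℝ := fun u => -(1/v₃) * Real.log (2*lam + v₃ * Real.cos (θ u)) with hwdef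
    have hw' : ∀ u, HasDerivAt w (Real.sin (θ u)) u := by
      intro u
      have hA : HasDerivAt (fun u => 2*lam + v₃ * Real.cos (θ u))
          (v₃ * (-Real.sin (θ u) * (2*lam + v₃ * Real.cos (θ u)))) u := by
        have h0 : HasDerivAt (fun u => Real.cos (θ u))
            (-Real.sin (θ u) * (2*lam + v₃ * Real.cos (θ u))) u :=
          (Real.hasDerivAt_cos (θ u)).comp u (hθ u)
        have := (h0.const_mul v₃).const_add (2*lam)
        convert this using 1
      have hlog := (hA.log (ne_of_gt (hApos u))).const_mul (-(1/v₃))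
      refine hlog.congr_deriv ?_
      symm
      rw [mul_div_assoc]
      rw [mul_div_assoc, div_self (ne_of_gt (hApos u))]
      field_simp
    have hdiff : Differentiable ℝ (fun u => z u - w u) :=
      fun u => ((hz u).sub (hw' u)).differentiableAt
    have hzero : ∀ u, deriv (fun u => z u - w u) u = 0 := by
      intro u
      exact ((hz u).sub (hw' u)).deriv.trans (sub_self _)
    have hce := is_const_of_deriv_eq_zero hdiff hzero T 0
    have hwT : w T = w 0 := by
      rw [hwdef]; simp only []
      rw [hTval, hθ0, Real.cos_two_pi, Real.cos_zero]
    rw [hz0] at hce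
    linarith [hce, hwT]
  have hyper := haux y (fun x => Real.cos x) hy Real.cos_add_two_pi s
  have hzper := haux z (fun x => Real.sin x) hz Real.sin_add_two_pi s
  rw [hy0] at hyper
  rw [hz0] at hzper
  rw [hzT] at hzper
  exact ⟨by linarith, by linarith, hθper s⟩
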